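/- Let G be a graph on n vertices having an independent set M = {v₁, v₂, …, v_k} of k ≥ 1 vertices, each of maximum degree Δ(G), such that N(v_i) ∩ N(v_j) = ∅ for all distinct v_i, v_j ∈ M. Then for every permutation π of V(G) and every i ∈ {1, 2, …, k}, γ_p(πG) = i for all p ∈ ((i−1)(Δ(G)+2)/(2n), i(Δ(G)+2)/(2n)]. -/

import Mathlib

open SimpleGraph

/-- Closed neighborhood of a set of vertices. -/
def closedNbhd {V : Type*} (G : SimpleGraph V) (S : Set V) : Set V :=
  {v | v ∈ S ∨ ∃ u ∈ S, G.Adj u v}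

/-- `S` is a `p`-dominating set of `G`. -/
def IsPDomSet {V : Type*} [Fintype V] (G : SimpleGraph V) (p : ℝ) (S : Set V) : Prop :=
  p ≤ (closedNbhd G S).ncard / (Fintype.card V : ℝ)

/-- The `p`-domination number of `G`. -/
noncomputable def pDomNum {V : Type*} [Fintype V] (G : SimpleGraph V) (p : ℝ) : ℕ :=
  sInf {k | ∃ S : Set V, IsPDomSet G p S ∧ S.ncard = k}

/-- `S` is a dominating set of `G`. -/
def IsDomSet {V : Type*} (G : SimpleGraph V) (S : Set V) : Prop :=
  ∀ v, v ∈ closedNbhd G S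

/-- The domination number of `G`. -/
noncomputable def domNum {V : Type*} (G : SimpleGraph V) : ℕ :=
  sInf {k | ∃ S : Set V, IsDomSet G S ∧ S.ncard = k}

/-- The prism of `G` with respect to a permutation `π`. -/
def prism {V : Type*} (G : SimpleGraph V) (π : Equiv.Perm V) : SimpleGraph (V ⊕ V) where
  Adj x y := match x, y with
    | .inl a, .inl b => G.Adj a b
    | .inr a, .inr b => G.Adj a b
    | .inl a, .inr b => π a = b
    | .inr a, .inl b => π b = a
  symm := ⟨by rintro (a|a) (b|b) h <;> simp_all [SimpleGraph.adj_comm]⟩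
  loopless := ⟨by rintro (a|a) h <;> simp_all⟩


section StmtAux

variable {W : Type*}

lemma closedNbhd_singleton' (G : SimpleGraph W) (v : W) :
    closedNbhd G {v} = insert v (G.neighborSet v) := by
  ext x; simp [closedNbhd, SimpleGraph.mem_neighborSet]

lemma closedNbhd_biUnion' (G : SimpleGraph W) (S : Set W) :
    closedNbhd G S = ⋃ v ∈ S, closedNbhd G {v} := by
  ext x; simp [closedNbhd]; aesop

lemma closedNbhd_insert' (G : SimpleGraph W) (a : W) (S : Set W) :
    closedNbhd G (insert a S) = closedNbhd G {a} ∪ closedNbhd G S := by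
  ext x; simp [closedNbhd]; tauto

lemma closedNbhd_empty' (G : SimpleGraph W) : closedNbhd G (∅ : Set W) = ∅ := by
  simp [closedNbhd]

lemma ncard_closedNbhd_le' [Fintype W] (G : SimpleGraph W) (c : ℕ)
    (h : ∀ v, (closedNbhd G {v}).ncard ≤ c) (S : Set W) :
    (closedNbhd G S).ncard ≤ S.ncard * c := by
  refine Set.Finite.induction_on (motive := fun S _ => (closedNbhd G S).ncard ≤ S.ncard * c) S S.toFinite (by simp [closedNbhd_empty']) ?_
  intro a s ha hs ih
  rw [closedNbhd_insert', Set.ncard_insert_of_notMem ha]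
  calc (closedNbhd G {a} ∪ closedNbhd G s).ncard
      ≤ (closedNbhd G {a}).ncard + (closedNbhd G s).ncard := Set.ncard_union_le _ _
    _ ≤ c + s.ncard * c := add_le_add (h a) ih
    _ ≤ (s.ncard + 1) * c := by ring_nf; omega

lemma prism_nbhd_inl' {V : Type*} (G : SimpleGraph V) (π : Equiv.Perm V) (a : V) :
    (prism G π).neighborSet (.inl a) = Sum.inl '' G.neighborSet a ∪ {Sum.inr (π a)} := by
  ext (b | b) <;> simp [prism, SimpleGraph.mem_neighborSet, SimpleGraph.Adj, eq_comm]

lemma prism_nbhd_inr' {V : Type*} (G : SimpleGraph V) (π : Equiv.Perm V) (a : V) :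
    (prism G π).neighborSet (.inr a) = Sum.inr '' G.neighborSet a ∪ {Sum.inl (π.symm a)} := by
  ext (b | b) <;> simp [prism, SimpleGraph.mem_neighborSet, SimpleGraph.Adj, eq_comm,
    Equiv.eq_symm_apply]

set_option linter.unusedSectionVars false

section PrismCount
variable {V : Type*} [Fintype V] {G : SimpleGraph V} {π : Equiv.Perm V} {Δ : ℕ}

lemma prism_cn_le (hmax : ∀ w : V, (G.neighborSet w).ncard ≤ Δ) (x : V ⊕ V) :
    (closedNbhd (prism G π) {x}).ncard ≤ Δ + 2 := by
  rw [closedNbhd_singleton']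
  refine le_trans (Set.ncard_insert_le _ _) ?_
  have : ((prism G π).neighborSet x).ncard ≤ Δ + 1 := by
    cases x with
    | inl a =>
      rw [prism_nbhd_inl']
      refine le_trans (Set.ncard_union_le _ _) ?_
      rw [Set.ncard_image_of_injective _ Sum.inl_injective, Set.ncard_singleton]
      exact add_le_add (hmax a) le_rfl
    | inr a =>
      rw [prism_nbhd_inr']
      refine le_trans (Set.ncard_union_le _ _) ?_
      rw [Set.ncard_image_of_injective _ Sum.inr_injective, Set.ncard_singleton]
      exact add_le_add (hmax a) le_rfl
  omega

lemma prism_cn_eq {v : V} (hdeg : (G.neighborSet v).ncard = Δ) :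
    (closedNbhd (prism G π) {(Sum.inl v : V ⊕ V)}).ncard = Δ + 2 := by
  rw [closedNbhd_singleton', prism_nbhd_inl']
  rw [Set.ncard_insert_of_notMem (by simp [G.irrefl]) (Set.toFinite _),
    Set.ncard_union_eq (by simp [Set.disjoint_singleton_right]) (Set.toFinite _) (Set.toFinite _),
    Set.ncard_image_of_injective _ Sum.inl_injective, Set.ncard_singleton, hdeg]

lemma prism_cn_disj {v w : V} (hvw : v ≠ w) (hadj1 : ¬ G.Adj v w) (hadj2 : ¬ G.Adj w v)
    (hd : G.neighborSet v ∩ G.neighborSet w = ∅) :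
    Disjoint (closedNbhd (prism G π) {(Sum.inl v : V ⊕ V)})
      (closedNbhd (prism G π) {(Sum.inl w : V ⊕ V)}) := by
  rw [Set.disjoint_left]
  intro x hxv hxw
  rw [closedNbhd_singleton', prism_nbhd_inl'] at hxv hxw
  rcases x with a | a
  · simp only [Set.mem_insert_iff, Set.mem_union, Set.mem_image,
      SimpleGraph.mem_neighborSet, Set.mem_singleton_iff] at hxv hxw
    have h1 : a = v ∨ G.Adj v a := by
      rcases hxv with h | h | h
      · exact Or.inl (Sum.inl_injective h ▸ rfl)
      · obtain ⟨b, hb, hba⟩ := h; exact Or.inr (Sum.inl_injective hba ▸ hb)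
      · exact absurd h (by simp)
    have h2 : a = w ∨ G.Adj w a := by
      rcases hxw with h | h | h
      · exact Or.inl (Sum.inl_injective h ▸ rfl)
      · obtain ⟨b, hb, hba⟩ := h; exact Or.inr (Sum.inl_injective hba ▸ hb)
      · exact absurd h (by simp)
    rcases h1 with rfl | h1 <;> rcases h2 with h2 | h2
    · exact hvw h2
    · exact hadj2 h2
    · exact hadj1 (h2 ▸ h1)
    · exact Set.eq_empty_iff_forall_notMem.mp hd a ⟨h1, h2⟩
  · simp only [Set.mem_insert_iff, Set.mem_union, Set.mem_image,
      SimpleGraph.mem_neighborSet, Set.mem_singleton_iff] at hxv hxw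
    have h1 : a = π v := by
      rcases hxv with h | h | h
      · exact absurd h (by simp)
      · obtain ⟨b, _, hba⟩ := h; exact absurd hba (by simp)
      · exact Sum.inr_injective h
    have h2 : a = π w := by
      rcases hxw with h | h | h
      · exact absurd h (by simp)
      · obtain ⟨b, _, hba⟩ := h; exact absurd hba (by simp)
      · exact Sum.inr_injective h
    exact hvw (π.injective (h1 ▸ h2))

lemma prism_count (M : Finset V)
    (hdeg : ∀ v ∈ M, (G.neighborSet v).ncard = Δ)
    (hindep : ∀ v ∈ M, ∀ w ∈ M, ¬ G.Adj v w)
    (hdisj : ∀ v ∈ M, ∀ w ∈ M, v ≠ w → G.neighborSet v ∩ G.neighborSet w = ∅) :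
    ∀ T : Finset V, T ⊆ M →
      (closedNbhd (prism G π) (Sum.inl '' (↑T : Set V))).ncard = T.card * (Δ + 2) := by
  intro T
  induction T using Finset.cons_induction with
  | empty => intro _; simp [closedNbhd_empty']
  | @cons a T haT ih =>
    intro hsub
    have haM : a ∈ M := hsub (Finset.mem_cons_self a T)
    have hTM : T ⊆ M := fun x hx => hsub (Finset.mem_cons_of_mem hx)
    have himg : (Sum.inl '' (↑(Finset.cons a T haT) : Set V) : Set (V ⊕ V))
        = insert (Sum.inl a) (Sum.inl '' (↑T : Set V)) := by
      rw [Finset.coe_cons, Set.image_insert_eq]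
    rw [himg, closedNbhd_insert']
    have hdisjU : Disjoint (closedNbhd (prism G π) {(Sum.inl a : V ⊕ V)})
        (closedNbhd (prism G π) (Sum.inl '' (↑T : Set V))) := by
      rw [closedNbhd_biUnion' (prism G π) (Sum.inl '' (↑T : Set V))]
      refine Set.disjoint_left.mpr ?_
      intro x hx hx2
      simp only [Set.mem_iUnion] at hx2
      obtain ⟨y, hy, hxy⟩ := hx2
      obtain ⟨w, hwT, rfl⟩ := hy
      have hw : w ∈ M := hTM hwT
      have haw : a ≠ w := fun h => haT (h ▸ hwT)
      exact Set.disjoint_left.mp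
        (prism_cn_disj haw (hindep a haM w hw) (hindep w hw a haM) (hdisj a haM w hw haw))
        hx hxy
    rw [Set.ncard_union_eq hdisjU (Set.toFinite _) (Set.toFinite _), prism_cn_eq (hdeg a haM),
      ih hTM, Finset.card_cons]
    ring

end PrismCount
end StmtAux

theorem stmt13 {V : Type*} [Fintype V] (G : SimpleGraph V) (n k Δ : ℕ)
    (hn : Fintype.card V = n)
    (M : Finset V) (hMcard : M.card = k) (hk : 1 ≤ k)
    (hmax : ∀ w : V, (G.neighborSet w).ncard ≤ Δ)
    (hdeg : ∀ v ∈ M, (G.neighborSet v).ncard = Δ)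
    (hindep : ∀ v ∈ M, ∀ w ∈ M, ¬ G.Adj v w)
    (hdisj : ∀ v ∈ M, ∀ w ∈ M, v ≠ w → G.neighborSet v ∩ G.neighborSet w = ∅) :
    ∀ π : Equiv.Perm V, ∀ i : ℕ, 1 ≤ i → i ≤ k →
      ∀ p : ℝ, ((i : ℝ) - 1) * ((Δ : ℝ) + 2) / (2 * n) < p →
        p ≤ (i : ℝ) * ((Δ : ℝ) + 2) / (2 * n) →
        pDomNum (prism G π) p = i  := by
  intro π i hi1 hik p hp1 hp2
  have hM0 : M.Nonempty := Finset.card_pos.mp (by omega)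
  have hn1 : 1 ≤ n := by
    obtain ⟨v, _⟩ := hM0
    have : 0 < Fintype.card V := Fintype.card_pos_iff.mpr ⟨v⟩
    omega
  have hcard2 : (Fintype.card (V ⊕ V) : ℝ) = 2 * n := by
    rw [Fintype.card_sum, hn]; push_cast; ring
  have h2n : (0 : ℝ) < 2 * n := by
    have : (1 : ℝ) ≤ n := by exact_mod_cast hn1
    linarith
  obtain ⟨T, hTM, hTcard⟩ := Finset.exists_subset_card_eq (show i ≤ M.card by omega)
  have hcount := prism_count (π := π) M hdeg hindep hdisj T hTM
  have hmem : i ∈ {k | ∃ S : Set (V ⊕ V), IsPDomSet (prism G π) p S ∧ S.ncard = k} := by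
    refine ⟨Sum.inl '' (↑T : Set V), ?_, ?_⟩
    · unfold IsPDomSet
      rw [hcount, hTcard, hcard2]
      refine le_trans hp2 (le_of_eq ?_)
      push_cast; ring
    · rw [Set.ncard_image_of_injective _ Sum.inl_injective, Set.ncard_coe_finset, hTcard]
  have hlow : ∀ j ∈ {k | ∃ S : Set (V ⊕ V), IsPDomSet (prism G π) p S ∧ S.ncard = k}, i ≤ j := by
    intro j hj
    by_contra hlt
    push_neg at hlt
    obtain ⟨S, hS, hScard⟩ := hj
    have hb : (closedNbhd (prism G π) S).ncard ≤ j * (Δ + 2) := by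
      have := ncard_closedNbhd_le' (prism G π) (Δ + 2) (prism_cn_le hmax) S
      rwa [hScard] at this
    unfold IsPDomSet at hS
    rw [hcard2] at hS
    have hc1 : ((closedNbhd (prism G π) S).ncard : ℝ) / (2 * n)
        ≤ ((i : ℝ) - 1) * ((Δ : ℝ) + 2) / (2 * n) := by
      gcongr
      have hbr : ((closedNbhd (prism G π) S).ncard : ℝ) ≤ (j : ℝ) * ((Δ : ℝ) + 2) := by
        exact_mod_cast hb
      have hji : (j : ℝ) ≤ (i : ℝ) - 1 := by
        have : (j : ℝ) + 1 ≤ (i : ℝ) := by exact_mod_cast hlt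
        linarith
      nlinarith [hji, hbr]
    linarith
  exact le_antisymm (Nat.sInf_le hmem) (le_csInf ⟨i, hmem⟩ hlow)
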